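/- (Approximate Top-k result.) Assume the SpaceSaving guarantees with table size K on a stream of length N with sorted frequency function f. Let k < K ≤ n, let 0 < ε < 1, suppose f(k) > 0 and c_K ≤ ε·f(k). Then every index i ∈ {1,…,n} with f(i) > (1+ε)·f(k) belongs to the set {σ(1),…,σ(k)} of elements at the k largest table positions, and no index i with f(i) < (1−ε)·f(k) belongs to {σ(1),…,σ(k)}. -/

import Mathlib

/-- approximate Top-k: under the SpaceSaving guarantees with
table size `K`, if `k < K ≤ n`, `0 < ε < 1`, `f k > 0` and `c K ≤ ε · f k`,
then every index `i` with `f i > (1+ε)·f k` is among `{σ 1, …, σ k}`, and no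
index `i` with `f i < (1-ε)·f k` is among `{σ 1, …, σ k}`. -/
theorem stmt5
    (n K N : ℕ) (f c σ : ℕ → ℕ)
    (hfmono : ∀ i ∈ Finset.Icc 1 n, ∀ j ∈ Finset.Icc 1 n, i ≤ j → f j ≤ f i)
    (hfsum : ∑ i ∈ Finset.Icc 1 n, f i = N)
    (hcmono : ∀ i ∈ Finset.Icc 1 K, ∀ j ∈ Finset.Icc 1 K, i ≤ j → c j ≤ c i)
    (hcsum : ∑ j ∈ Finset.Icc 1 K, c j = N)
    (hσmem : ∀ j ∈ Finset.Icc 1 K, σ j ∈ Finset.Icc 1 n)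
    (hσinj : ∀ j ∈ Finset.Icc 1 K, ∀ j' ∈ Finset.Icc 1 K, σ j = σ j' → j = j')
    (hlow : ∀ j ∈ Finset.Icc 1 K, c j ≤ f (σ j) + c K)
    (hup : ∀ j ∈ Finset.Icc 1 K, f (σ j) ≤ c j)
    (hout : ∀ i ∈ Finset.Icc 1 n, (∀ j ∈ Finset.Icc 1 K, σ j ≠ i) → f i ≤ c K)
    (k : ℕ) (ε : ℝ) (hk1 : 1 ≤ k) (hkK : k < K) (hKn : K ≤ n)
    (hε0 : 0 < ε) (hε1 : ε < 1) (hfk : 0 < f k)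
    (hcK : (c K : ℝ) ≤ ε * (f k : ℝ)) :
    ∀ i ∈ Finset.Icc 1 n,
      ((1 + ε) * (f k : ℝ) < (f i : ℝ) → i ∈ Finset.image σ (Finset.Icc 1 k)) ∧
      ((f i : ℝ) < (1 - ε) * (f k : ℝ) → i ∉ Finset.image σ (Finset.Icc 1 k)) := by
  have hkK' : k ≤ K := hkK.le
  have hkmem : k ∈ Finset.Icc 1 K := Finset.mem_Icc.mpr ⟨hk1, hkK'⟩
  have hKmem : K ∈ Finset.Icc 1 K := Finset.mem_Icc.mpr ⟨le_trans hk1 hkK', le_refl K⟩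
  have hknmem : k ∈ Finset.Icc 1 n := Finset.mem_Icc.mpr ⟨hk1, le_trans hkK' hKn⟩
  have hfkR : (0:ℝ) < (f k : ℝ) := by exact_mod_cast hfk
  -- Lemma A : f k ≤ c k
  have hA : f k ≤ c k := by
    by_contra h
    push_neg at h
    set S := (Finset.Icc 1 K).filter (fun j => σ j ∈ Finset.Icc 1 k) with hSdef
    have hsub : Finset.Icc 1 k ⊆ Finset.image σ S := by
      intro i hi
      have hik := Finset.mem_Icc.mp hi
      have hin : i ∈ Finset.Icc 1 n :=
        Finset.mem_Icc.mpr ⟨hik.1, le_trans hik.2 (le_trans hkK' hKn)⟩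
      have hfi : f k ≤ f i := hfmono i hin k hknmem hik.2
      have hcKk : c K ≤ c k := hcmono k hkmem K hKmem hkK'
      have hcKi : ¬ f i ≤ c K := by omega
      have hex : ¬ (∀ j ∈ Finset.Icc 1 K, σ j ≠ i) := fun hh => hcKi (hout i hin hh)
      push_neg at hex
      obtain ⟨j, hj, hji⟩ := hex
      exact Finset.mem_image.mpr ⟨j, Finset.mem_filter.mpr ⟨hj, hji ▸ hi⟩, hji⟩
    have h1 : k ≤ S.card := by
      calc k = (Finset.Icc 1 k).card := by simp
        _ ≤ (Finset.image σ S).card := Finset.card_le_card hsub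
        _ ≤ S.card := Finset.card_image_le
    have h2 : S ⊆ Finset.Icc 1 (k-1) := by
      intro j hj
      obtain ⟨hjK, hσj⟩ := Finset.mem_filter.mp hj
      have hjK' := Finset.mem_Icc.mp hjK
      have hσk := Finset.mem_Icc.mp hσj
      have hσn : σ j ∈ Finset.Icc 1 n := hσmem j hjK
      have hfσ : f k ≤ f (σ j) := hfmono (σ j) hσn k hknmem hσk.2
      have hup' : f (σ j) ≤ c j := hup j hjK
      have hcc : c k < c j := by omega
      have hjk : j < k := by
        by_contra hc
        push_neg at hc
        exact absurd (hcmono k hkmem j hjK hc) (by omega)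
      exact Finset.mem_Icc.mpr ⟨hjK'.1, by omega⟩
    have h3 := Finset.card_le_card h2
    simp only [Nat.card_Icc] at h3
    omega
  -- Lemma B : c (k+1) ≤ f k + c K
  have hk1K : k+1 ∈ Finset.Icc 1 K := Finset.mem_Icc.mpr ⟨by omega, hkK⟩
  have hB : c (k+1) ≤ f k + c K := by
    by_contra h
    push_neg at h
    have hsub : Finset.image σ (Finset.Icc 1 (k+1)) ⊆ Finset.Icc 1 (k-1) := by
      intro i hi
      obtain ⟨j, hj, rfl⟩ := Finset.mem_image.mp hi
      have hj' := Finset.mem_Icc.mp hj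
      have hjK : j ∈ Finset.Icc 1 K := Finset.mem_Icc.mpr ⟨hj'.1, by omega⟩
      have hcj : c (k+1) ≤ c j := hcmono j hjK (k+1) hk1K hj'.2
      have hlow' : c j ≤ f (σ j) + c K := hlow j hjK
      have hfσ : f k < f (σ j) := by omega
      have hσn := Finset.mem_Icc.mp (hσmem j hjK)
      have hσlt : σ j < k := by
        by_contra hc
        push_neg at hc
        have := hfmono k hknmem (σ j) (hσmem j hjK) hc
        omega
      exact Finset.mem_Icc.mpr ⟨hσn.1, by omega⟩
    have hinj : Set.InjOn σ ↑(Finset.Icc 1 (k+1)) := by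
      intro a ha b hb hab
      simp only [Finset.coe_Icc, Set.mem_Icc] at ha hb
      exact hσinj a (Finset.mem_Icc.mpr ⟨ha.1, by omega⟩) b
        (Finset.mem_Icc.mpr ⟨hb.1, by omega⟩) hab
    have hcard := Finset.card_le_card hsub
    rw [Finset.card_image_of_injOn hinj] at hcard
    simp only [Nat.card_Icc] at hcard
    omega
  intro i hi
  constructor
  · intro hgt
    by_contra hnot
    by_cases hc : ∀ j ∈ Finset.Icc 1 K, σ j ≠ i
    · have h1 : f i ≤ c K := hout i hi hc
      have h2 : (f i : ℝ) ≤ ε * (f k : ℝ) := le_trans (Nat.cast_le.mpr h1) hcK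
      linarith
    · push_neg at hc
      obtain ⟨j, hj, hji⟩ := hc
      have hj' := Finset.mem_Icc.mp hj
      have hjk : k < j := by
        by_contra hle
        push_neg at hle
        exact hnot (Finset.mem_image.mpr ⟨j, Finset.mem_Icc.mpr ⟨hj'.1, hle⟩, hji⟩)
      have h1 : f i ≤ c (k+1) := by
        have hu := hup j hj
        rw [hji] at hu
        have hm := hcmono (k+1) hk1K j hj (by omega)
        omega
      have h2 : f i ≤ f k + c K := by omega
      have h3 : (f i : ℝ) ≤ (f k : ℝ) + (c K : ℝ) := by exact_mod_cast h2
      linarith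
  · intro hlt himg
    obtain ⟨j, hj, hji⟩ := Finset.mem_image.mp himg
    have hj' := Finset.mem_Icc.mp hj
    have hjK : j ∈ Finset.Icc 1 K := Finset.mem_Icc.mpr ⟨hj'.1, by omega⟩
    have h1 : c k ≤ c j := hcmono j hjK k hkmem hj'.2
    have h2 : c j ≤ f (σ j) + c K := hlow j hjK
    have h3 : f k ≤ f i + c K := by rw [← hji]; omega
    have h4 : (f k : ℝ) ≤ (f i : ℝ) + (c K : ℝ) := by exact_mod_cast h3
    linarith
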